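/- arXiv:0801.1417 — 2 statements merged into one kernel-verified Lean document; each statement's English description precedes it below -/
import Mathlib

section
/- With ω as above, the restriction of ω to the subgroup I_{2,z} = ⟨c_z, a_z, b_z⟩ (c_z = −id; a_z: f1↦f2↦f3↦f4↦f1 cyclically; b_z: f1↔f2, f3↔f4) is nontrivial, and its kernel equals the subgroup I_3 = ⟨c_x, b_x, a_x²⟩, where c_x: f1↔f3, f2↔f4, b_x: f1↔f2, f3↔f4, a_x² = −id. -/
/-- The standard basis vectors `f₁, f₂, f₃, f₄` of `ℝ⁴`. -/
noncomputable def f (i : Fin 4) : Fin 4 → ℝ := Pi.single i 1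

/-- The `i`-th coordinate line `ℝ·fᵢ` of `ℝ⁴`. -/
noncomputable def line (i : Fin 4) : Submodule ℝ (Fin 4 → ℝ) := Submodule.span ℝ {f i}

/-- `g` permutes the four coordinate lines of `ℝ⁴` according to the permutation `σ`. -/
noncomputable def PermLines (g : LinearMap.GeneralLinearGroup ℝ (Fin 4 → ℝ))
    (σ : Equiv.Perm (Fin 4)) : Prop :=
  ∀ i, Submodule.map (g.val : (Fin 4 → ℝ) →ₗ[ℝ] (Fin 4 → ℝ)) (line i) = line (σ i)

abbrev GL4' := LinearMap.GeneralLinearGroup ℝ (Fin 4 → ℝ)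

lemma line_inj : Function.Injective line := by
  intro i j h
  have h1 : f i ∈ line j := h ▸ Submodule.mem_span_singleton_self (f i)
  rw [line, Submodule.mem_span_singleton] at h1
  obtain ⟨c, hc⟩ := h1
  by_contra hij
  have := congrFun hc i
  simp [f, Pi.single_eq_same, Pi.single_eq_of_ne hij, Pi.single_eq_of_ne (Ne.symm hij)] at this

lemma permLines_unique {g : GL4'} {σ σ' : Equiv.Perm (Fin 4)}
    (h : PermLines g σ) (h' : PermLines g σ') : σ = σ' :=
  Equiv.ext fun i => line_inj ((h i).symm.trans (h' i))

lemma permLines_mul {g h : GL4'} {σ τ : Equiv.Perm (Fin 4)}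
    (hg : PermLines g σ) (hh : PermLines h τ) : PermLines (g * h) (σ * τ) := by
  intro i
  have : ((g * h).val : (Fin 4 → ℝ) →ₗ[ℝ] (Fin 4 → ℝ)) = g.val ∘ₗ h.val := rfl
  rw [this, Submodule.map_comp, hh i, hg (τ i)]
  rfl

lemma permLines_inv {g : GL4'} {σ : Equiv.Perm (Fin 4)}
    (hg : PermLines g σ) : PermLines g⁻¹ σ⁻¹ := by
  intro i
  have h1 := hg (σ⁻¹ i)
  rw [← Equiv.Perm.mul_apply, mul_inv_cancel, Equiv.Perm.one_apply] at h1
  calc Submodule.map (g⁻¹.val : (Fin 4 → ℝ) →ₗ[ℝ] (Fin 4 → ℝ)) (line i)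
      = Submodule.map (g⁻¹.val : (Fin 4 → ℝ) →ₗ[ℝ] (Fin 4 → ℝ))
        (Submodule.map (g.val : (Fin 4 → ℝ) →ₗ[ℝ] (Fin 4 → ℝ)) (line (σ⁻¹ i))) := by rw [h1]
    _ = Submodule.map ((g⁻¹.val ∘ₗ g.val : (Fin 4 → ℝ) →ₗ[ℝ] (Fin 4 → ℝ))) (line (σ⁻¹ i)) :=
        (Submodule.map_comp _ _ _).symm
    _ = line (σ⁻¹ i) := by
        have : (g⁻¹.val ∘ₗ g.val : (Fin 4 → ℝ) →ₗ[ℝ] (Fin 4 → ℝ)) = LinearMap.id := by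
          rw [← Module.End.mul_eq_comp, g.inv_mul]; rfl
        rw [this, Submodule.map_id]

lemma gl_ext {g h : GL4'} (he : ∀ i, g.val (f i) = h.val (f i)) : g = h := by
  apply Units.ext
  apply (Pi.basisFun ℝ (Fin 4)).ext
  intro i
  simpa [f] using he i

lemma permLines_of {g : GL4'} {σ : Equiv.Perm (Fin 4)}
    (h : ∀ i, g.val (f i) = f (σ i) ∨ g.val (f i) = -(f (σ i))) : PermLines g σ := by
  intro i
  rw [line, Submodule.map_span, Set.image_singleton]
  rcases h i with h' | h' <;> rw [h']
  · rfl
  · rw [show ({-(f (σ i))} : Set (Fin 4 → ℝ)) = -{f (σ i)} by simp, Submodule.span_neg]; rfl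

def pc : Equiv.Perm (Fin 4) := Equiv.swap 0 2 * Equiv.swap 1 3
def pb : Equiv.Perm (Fin 4) := Equiv.swap 0 1 * Equiv.swap 2 3
def pa : Equiv.Perm (Fin 4) := finRotate 4

/-- The restriction to `I₂_z = ⟨c_z, a_z, b_z⟩` of the homomorphism `ω` (the sign of
the induced permutation of the four coordinate lines) is nontrivial — `a_z` induces an
odd permutation — and its kernel equals the subgroup `I₃ = ⟨cₓ, bₓ, aₓ²⟩`. -/
theorem omega_on_I2z_nontrivial_kernel_I3
    (cx ax bx cz az bz : LinearMap.GeneralLinearGroup ℝ (Fin 4 → ℝ))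
    (hcx1 : cx.val (f 0) = f 2) (hcx2 : cx.val (f 2) = f 0)
    (hcx3 : cx.val (f 1) = f 3) (hcx4 : cx.val (f 3) = f 1)
    (hax1 : ax.val (f 0) = f 1) (hax2 : ax.val (f 1) = -f 0)
    (hax3 : ax.val (f 2) = f 3) (hax4 : ax.val (f 3) = -f 2)
    (hbx1 : bx.val (f 0) = f 1) (hbx2 : bx.val (f 1) = f 0)
    (hbx3 : bx.val (f 2) = f 3) (hbx4 : bx.val (f 3) = f 2)
    (hcz : ∀ i : Fin 4, cz.val (f i) = -f i)
    (haz1 : az.val (f 0) = f 1) (haz2 : az.val (f 1) = f 2)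
    (haz3 : az.val (f 2) = f 3) (haz4 : az.val (f 3) = f 0)
    (hbz1 : bz.val (f 0) = f 1) (hbz2 : bz.val (f 1) = f 0)
    (hbz3 : bz.val (f 2) = f 3) (hbz4 : bz.val (f 3) = f 2) :
    (∃ σ : Equiv.Perm (Fin 4), PermLines az σ ∧ Equiv.Perm.sign σ = -1) ∧
      ({g | g ∈ Subgroup.closure ({cz, az, bz} :
            Set (LinearMap.GeneralLinearGroup ℝ (Fin 4 → ℝ))) ∧
          ∀ σ : Equiv.Perm (Fin 4), PermLines g σ → Equiv.Perm.sign σ = 1} :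
          Set (LinearMap.GeneralLinearGroup ℝ (Fin 4 → ℝ))) =
        ↑(Subgroup.closure ({cx, bx, ax ^ 2} :
            Set (LinearMap.GeneralLinearGroup ℝ (Fin 4 → ℝ)))) := by
  set K := Subgroup.closure ({cx, bx, ax ^ 2} : Set GL4') with hK
  set G := Subgroup.closure ({cz, az, bz} : Set GL4') with hG
  -- element identities, all checked on the basis
  have Eax2 : ax ^ 2 = cz := by
    apply gl_ext; intro i; fin_cases i <;>
      simp [pow_two, Units.val_mul, Module.End.mul_apply, hax1, hax2, hax3, hax4, hcz]
  have Ecx : az * az = cx := by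
    apply gl_ext; intro i; fin_cases i <;>
      simp [Units.val_mul, Module.End.mul_apply, haz1, haz2, haz3, haz4, hcx1, hcx2, hcx3, hcx4]
  have Ebz : bz = bx := by
    apply gl_ext; intro i; fin_cases i <;>
      simp [hbz1, hbz2, hbz3, hbz4, hbx1, hbx2, hbx3, hbx4]
  have Ecomm1 : az * cx = cx * az := by
    apply gl_ext; intro i; fin_cases i <;>
      simp [Units.val_mul, Module.End.mul_apply, haz1, haz2, haz3, haz4, hcx1, hcx2, hcx3, hcx4]
  have Ecomm2 : az * bx = (cx * bx) * az := by
    apply gl_ext; intro i; fin_cases i <;>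
      simp [Units.val_mul, Module.End.mul_apply, haz1, haz2, haz3, haz4, hcx1, hcx2, hcx3, hcx4,
        hbx1, hbx2, hbx3, hbx4]
  have Ecomm2' : bx * az = az * (cx * bx) := by
    apply gl_ext; intro i; fin_cases i <;>
      simp [Units.val_mul, Module.End.mul_apply, haz1, haz2, haz3, haz4, hcx1, hcx2, hcx3, hcx4,
        hbx1, hbx2, hbx3, hbx4]
  have Ecomm3 : az * ax ^ 2 = ax ^ 2 * az := by
    apply gl_ext; intro i; fin_cases i <;>
      simp [pow_two, Units.val_mul, Module.End.mul_apply, haz1, haz2, haz3, haz4,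
        hax1, hax2, hax3, hax4]
  -- memberships
  have hcxK : cx ∈ K := Subgroup.subset_closure (by simp)
  have hbxK : bx ∈ K := Subgroup.subset_closure (by simp)
  have hax2K : ax ^ 2 ∈ K := Subgroup.subset_closure (by simp)
  have hczG : cz ∈ G := Subgroup.subset_closure (by simp)
  have hazG : az ∈ G := Subgroup.subset_closure (by simp)
  have hbzG : bz ∈ G := Subgroup.subset_closure (by simp)
  have hazK2 : az * az ∈ K := Ecx ▸ hcxK
  have hKG : K ≤ G := by
    rw [hK]
    apply (Subgroup.closure_le _).2
    intro x hx
    simp only [Set.mem_insert_iff, Set.mem_singleton_iff] at hx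
    rcases hx with rfl | rfl | rfl
    · rw [← Ecx]; exact mul_mem hazG hazG
    · rw [← Ebz]; exact hbzG
    · rw [Eax2]; exact hczG
  -- conjugation by az preserves K
  have hconj : ∀ k ∈ K, az * k * az⁻¹ ∈ K := by
    intro k hk
    induction hk using Subgroup.closure_induction with
    | mem x hx =>
        simp only [Set.mem_insert_iff, Set.mem_singleton_iff] at hx
        rcases hx with rfl | rfl | rfl
        · rw [Ecomm1, mul_inv_cancel_right]; exact hcxK
        · rw [Ecomm2, mul_inv_cancel_right]; exact mul_mem hcxK hbxK
        · rw [Ecomm3, mul_inv_cancel_right]; exact hax2K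
    | one =>
        have e : az * (1 : GL4') * az⁻¹ = 1 := by group
        rw [e]; exact K.one_mem
    | mul x y hx hy ihx ihy =>
        have e : az * (x * y) * az⁻¹ = (az * x * az⁻¹) * (az * y * az⁻¹) := by group
        rw [e]; exact mul_mem ihx ihy
    | inv x hx ih =>
        have e : az * x⁻¹ * az⁻¹ = (az * x * az⁻¹)⁻¹ := by group
        rw [e]; exact inv_mem ih
  -- key dichotomy
  have hA : ∀ g ∈ G, g ∈ K ∨ az * g ∈ K := by
    intro g hg
    induction hg using Subgroup.closure_induction with
    | mem x hx =>
        simp only [Set.mem_insert_iff, Set.mem_singleton_iff] at hx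
        rcases hx with rfl | rfl | rfl
        · left; exact Eax2 ▸ hax2K
        · right; exact hazK2
        · left; rw [Ebz]; exact hbxK
    | one => left; exact K.one_mem
    | mul x y hx hy ihx ihy =>
        rcases ihx with hx' | hx' <;> rcases ihy with hy' | hy'
        · left; exact mul_mem hx' hy'
        · right
          have e : az * (x * y) = (az * x * az⁻¹) * (az * y) := by group
          rw [e]; exact mul_mem (hconj _ hx') hy'
        · right
          have e : az * (x * y) = (az * x) * y := by group
          rw [e]; exact mul_mem hx' hy'
        · left
          have e : x * y = (az * az)⁻¹ * (az * (az * x) * az⁻¹) * (az * y) := by group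
          rw [e]; exact mul_mem (mul_mem (inv_mem hazK2) (hconj _ hx')) hy'
    | inv x hx ih =>
        rcases ih with h' | h'
        · left; exact inv_mem h'
        · right
          have e : az * x⁻¹ = (az * (az * x)⁻¹ * az⁻¹) * (az * az) := by group
          rw [e]; exact mul_mem (hconj _ (inv_mem h')) hazK2
  -- the generators of K permute the lines with even permutations
  have hPcx : PermLines cx pc := by
    apply permLines_of
    intro i; fin_cases i
    · exact Or.inl (by show (cx).val (f 0) = f (pc 0); rw [show pc (0:Fin 4) = 2 by decide]; exact hcx1)
    · exact Or.inl (by show (cx).val (f 1) = f (pc 1); rw [show pc (1:Fin 4) = 3 by decide]; exact hcx3)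
    · exact Or.inl (by show (cx).val (f 2) = f (pc 2); rw [show pc (2:Fin 4) = 0 by decide]; exact hcx2)
    · exact Or.inl (by show (cx).val (f 3) = f (pc 3); rw [show pc (3:Fin 4) = 1 by decide]; exact hcx4)
  have hPbx : PermLines bx pb := by
    apply permLines_of
    intro i; fin_cases i
    · exact Or.inl (by show (bx).val (f 0) = f (pb 0); rw [show pb (0:Fin 4) = 1 by decide]; exact hbx1)
    · exact Or.inl (by show (bx).val (f 1) = f (pb 1); rw [show pb (1:Fin 4) = 0 by decide]; exact hbx2)
    · exact Or.inl (by show (bx).val (f 2) = f (pb 2); rw [show pb (2:Fin 4) = 3 by decide]; exact hbx3)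
    · exact Or.inl (by show (bx).val (f 3) = f (pb 3); rw [show pb (3:Fin 4) = 2 by decide]; exact hbx4)
  have hPax2 : PermLines (ax ^ 2) 1 := by
    rw [Eax2]
    exact permLines_of fun i => Or.inr (hcz i)
  have hPaz : PermLines az pa := by
    apply permLines_of
    intro i; fin_cases i
    · exact Or.inl (by show (az).val (f 0) = f (pa 0); rw [show pa (0:Fin 4) = 1 by decide]; exact haz1)
    · exact Or.inl (by show (az).val (f 1) = f (pa 1); rw [show pa (1:Fin 4) = 2 by decide]; exact haz2)
    · exact Or.inl (by show (az).val (f 2) = f (pa 2); rw [show pa (2:Fin 4) = 3 by decide]; exact haz3)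
    · exact Or.inl (by show (az).val (f 3) = f (pa 3); rw [show pa (3:Fin 4) = 0 by decide]; exact haz4)
  -- every element of K permutes the lines with an even permutation
  have hB : ∀ g ∈ K, ∃ σ : Equiv.Perm (Fin 4), PermLines g σ ∧ Equiv.Perm.sign σ = 1 := by
    intro g hg
    induction hg using Subgroup.closure_induction with
    | mem x hx =>
        simp only [Set.mem_insert_iff, Set.mem_singleton_iff] at hx
        rcases hx with rfl | rfl | rfl
        · exact ⟨pc, hPcx, by decide⟩
        · exact ⟨pb, hPbx, by decide⟩
        · exact ⟨1, hPax2, by simp⟩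
    | one =>
        refine ⟨1, fun i => ?_, by simp⟩
        have : ((1 : GL4').val : (Fin 4 → ℝ) →ₗ[ℝ] (Fin 4 → ℝ)) = LinearMap.id := rfl
        rw [this, Submodule.map_id]; rfl
    | mul x y hx hy ihx ihy =>
        obtain ⟨σ, h1, h2⟩ := ihx
        obtain ⟨τ, h3, h4⟩ := ihy
        exact ⟨σ * τ, permLines_mul h1 h3, by rw [map_mul, h2, h4, mul_one]⟩
    | inv x hx ih =>
        obtain ⟨σ, h1, h2⟩ := ih
        exact ⟨σ⁻¹, permLines_inv h1, by rw [map_inv, h2]; rfl⟩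
  constructor
  · exact ⟨pa, hPaz, by decide⟩
  · ext g
    simp only [Set.mem_setOf_eq, SetLike.mem_coe]
    constructor
    · rintro ⟨hgG, hev⟩
      rcases hA g hgG with h | h
      · exact h
      · exfalso
        obtain ⟨σ, hσ, hs⟩ := hB _ h
        have hg' : PermLines g (pa⁻¹ * σ) := by
          have h2 := permLines_mul (permLines_inv hPaz) hσ
          have e : az⁻¹ * (az * g) = g := by group
          rwa [e] at h2
        have h3 := hev _ hg'
        rw [map_mul, map_inv, hs, show Equiv.Perm.sign pa = -1 by decide] at h3
        simp at h3
    · intro hgK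
      refine ⟨hKG hgK, fun σ hσ => ?_⟩
      obtain ⟨σ₀, h0, hs0⟩ := hB _ hgK
      rwa [permLines_unique hσ h0]
end

section
/- The subgroup I_3 = ⟨c_x, b_x, −id⟩ of GL(4,R) equals the intersection I_{2,x} ∩ I_{2,y}, where I_{2,x} = ⟨c_x, a_x, b_x⟩ and I_{2,y} = ⟨c_y, a_y, b_y⟩ with c_y: f1↔f2, f3↔f4; a_y: f1↦f3, f3↦−f1, f2↦f4, f4↦−f2; b_y: f1↔f3, f2↔f4; and moreover I_3 has index 2 in I_{2,x}. -/
set_option maxHeartbeats 2000000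

lemma GL4ext {g h : LinearMap.GeneralLinearGroup ℝ (Fin 4 → ℝ)}
    (H : ∀ i : Fin 4, g.val (f i) = h.val (f i)) : g = h := by
  apply Units.ext
  apply (Pi.basisFun ℝ (Fin 4)).ext
  intro i
  simpa [f, Pi.basisFun_apply] using H i

lemma GLmul_apply (g h : LinearMap.GeneralLinearGroup ℝ (Fin 4 → ℝ)) (x : Fin 4 → ℝ) :
    (g * h).val x = g.val (h.val x) := rfl

lemma GLinv_apply (g : LinearMap.GeneralLinearGroup ℝ (Fin 4 → ℝ)) (x : Fin 4 → ℝ) :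
    (g⁻¹).val (g.val x) = x := by
  rw [← Module.End.mul_apply, ← Units.val_mul, inv_mul_cancel, Units.val_one,
    Module.End.one_apply]

lemma conj_closure {G : Type*} [Group G] {s : Set G} {a : G}
    (h : ∀ x ∈ s, a * x * a⁻¹ ∈ Subgroup.closure s) :
    ∀ n ∈ Subgroup.closure s, a * n * a⁻¹ ∈ Subgroup.closure s := by
  intro n hn
  induction hn using Subgroup.closure_induction with
  | mem x hx => exact h x hx
  | one => simpa using Subgroup.one_mem _
  | mul x y hx hy px py =>
      have e : a * (x * y) * a⁻¹ = (a * x * a⁻¹) * (a * y * a⁻¹) := by group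
      rw [e]; exact mul_mem px py
  | inv x hx px =>
      have e : a * x⁻¹ * a⁻¹ = (a * x * a⁻¹)⁻¹ := by group
      rw [e]; exact inv_mem px

noncomputable def Ssub : Subgroup (LinearMap.GeneralLinearGroup ℝ (Fin 4 → ℝ)) where
  carrier := {g | ∃ ε : ℝ, (ε = 1 ∨ ε = -1) ∧
    ((g.val (f 0 + f 1) = ε • (f 0 + f 1) ∧ g.val (f 2 + f 3) = ε • (f 2 + f 3)) ∨
     (g.val (f 0 + f 1) = ε • (f 2 + f 3) ∧ g.val (f 2 + f 3) = ε • (f 0 + f 1)))}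
  one_mem' := ⟨1, Or.inl rfl, Or.inl (by simp)⟩
  mul_mem' := by
    rintro g h ⟨ε, hε, hg⟩ ⟨δ, hδ, hh⟩
    refine ⟨ε * δ, ?_, ?_⟩
    · rcases hε with rfl | rfl <;> rcases hδ with rfl | rfl <;> norm_num
    · rcases hg with ⟨hg1, hg2⟩ | ⟨hg1, hg2⟩ <;> rcases hh with ⟨hh1, hh2⟩ | ⟨hh1, hh2⟩
      · exact Or.inl ⟨by rw [GLmul_apply, hh1, map_smul, hg1, smul_smul, mul_comm δ ε],
          by rw [GLmul_apply, hh2, map_smul, hg2, smul_smul, mul_comm δ ε]⟩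
      · exact Or.inr ⟨by rw [GLmul_apply, hh1, map_smul, hg2, smul_smul, mul_comm δ ε],
          by rw [GLmul_apply, hh2, map_smul, hg1, smul_smul, mul_comm δ ε]⟩
      · exact Or.inr ⟨by rw [GLmul_apply, hh1, map_smul, hg1, smul_smul, mul_comm δ ε],
          by rw [GLmul_apply, hh2, map_smul, hg2, smul_smul, mul_comm δ ε]⟩
      · exact Or.inl ⟨by rw [GLmul_apply, hh1, map_smul, hg2, smul_smul, mul_comm δ ε],
          by rw [GLmul_apply, hh2, map_smul, hg1, smul_smul, mul_comm δ ε]⟩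
  inv_mem' := by
    rintro g ⟨ε, hε, hg⟩
    have hε2 : ε * ε = 1 := by rcases hε with rfl | rfl <;> norm_num
    refine ⟨ε, hε, ?_⟩
    rcases hg with ⟨hg1, hg2⟩ | ⟨hg1, hg2⟩
    · refine Or.inl ⟨?_, ?_⟩
      · have h1 : g.val (ε • (f 0 + f 1)) = f 0 + f 1 := by
          rw [map_smul, hg1, smul_smul, hε2, one_smul]
        have h2 := congrArg (↑(g⁻¹) : (Fin 4 → ℝ) →ₗ[ℝ] (Fin 4 → ℝ)) h1
        rw [GLinv_apply] at h2
        exact h2.symm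
      · have h1 : g.val (ε • (f 2 + f 3)) = f 2 + f 3 := by
          rw [map_smul, hg2, smul_smul, hε2, one_smul]
        have h2 := congrArg (↑(g⁻¹) : (Fin 4 → ℝ) →ₗ[ℝ] (Fin 4 → ℝ)) h1
        rw [GLinv_apply] at h2
        exact h2.symm
    · refine Or.inr ⟨?_, ?_⟩
      · have h1 : g.val (ε • (f 2 + f 3)) = f 0 + f 1 := by
          rw [map_smul, hg2, smul_smul, hε2, one_smul]
        have h2 := congrArg (↑(g⁻¹) : (Fin 4 → ℝ) →ₗ[ℝ] (Fin 4 → ℝ)) h1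
        rw [GLinv_apply] at h2
        exact h2.symm
      · have h1 : g.val (ε • (f 0 + f 1)) = f 2 + f 3 := by
          rw [map_smul, hg1, smul_smul, hε2, one_smul]
        have h2 := congrArg (↑(g⁻¹) : (Fin 4 → ℝ) →ₗ[ℝ] (Fin 4 → ℝ)) h1
        rw [GLinv_apply] at h2
        exact h2.symm


/-- The subgroup `I₃ = ⟨cₓ, bₓ, −id⟩` of `GL(4,ℝ)` equals the intersection
`I₂ₓ ∩ I₂_y`, where `I₂ₓ = ⟨cₓ, aₓ, bₓ⟩` and `I₂_y = ⟨c_y, a_y, b_y⟩`; moreover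
`I₃` has index 2 in `I₂ₓ`. -/
theorem I3_eq_I2x_inter_I2y_and_index_two
    (cx ax bx negId cy ay by' : LinearMap.GeneralLinearGroup ℝ (Fin 4 → ℝ))
    (hcx1 : cx.val (f 0) = f 2) (hcx2 : cx.val (f 2) = f 0)
    (hcx3 : cx.val (f 1) = f 3) (hcx4 : cx.val (f 3) = f 1)
    (hax1 : ax.val (f 0) = f 1) (hax2 : ax.val (f 1) = -f 0)
    (hax3 : ax.val (f 2) = f 3) (hax4 : ax.val (f 3) = -f 2)
    (hbx1 : bx.val (f 0) = f 1) (hbx2 : bx.val (f 1) = f 0)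
    (hbx3 : bx.val (f 2) = f 3) (hbx4 : bx.val (f 3) = f 2)
    (hneg : ∀ i : Fin 4, negId.val (f i) = -f i)
    (hcy1 : cy.val (f 0) = f 1) (hcy2 : cy.val (f 1) = f 0)
    (hcy3 : cy.val (f 2) = f 3) (hcy4 : cy.val (f 3) = f 2)
    (hay1 : ay.val (f 0) = f 2) (hay2 : ay.val (f 2) = -f 0)
    (hay3 : ay.val (f 1) = f 3) (hay4 : ay.val (f 3) = -f 1)
    (hby1 : by'.val (f 0) = f 2) (hby2 : by'.val (f 2) = f 0)
    (hby3 : by'.val (f 1) = f 3) (hby4 : by'.val (f 3) = f 1) :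
    Subgroup.closure ({cx, bx, negId} :
        Set (LinearMap.GeneralLinearGroup ℝ (Fin 4 → ℝ))) =
      Subgroup.closure ({cx, ax, bx} :
          Set (LinearMap.GeneralLinearGroup ℝ (Fin 4 → ℝ))) ⊓
        Subgroup.closure ({cy, ay, by'} :
          Set (LinearMap.GeneralLinearGroup ℝ (Fin 4 → ℝ))) ∧
      (Subgroup.closure ({cx, bx, negId} :
          Set (LinearMap.GeneralLinearGroup ℝ (Fin 4 → ℝ)))).relIndex
        (Subgroup.closure ({cx, ax, bx} :
          Set (LinearMap.GeneralLinearGroup ℝ (Fin 4 → ℝ)))) = 2 := by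
  set N := Subgroup.closure ({cx, bx, negId} : Set (LinearMap.GeneralLinearGroup ℝ (Fin 4 → ℝ))) with hNdef
  -- inverse application facts
  have haxi0 : (↑(ax⁻¹) : (Fin 4 → ℝ) →ₗ[ℝ] _) (f 0) = -f 1 := by
    have h := GLinv_apply ax (f 1); rw [hax2, map_neg] at h
    exact neg_eq_iff_eq_neg.mp h
  have haxi1 : (↑(ax⁻¹) : (Fin 4 → ℝ) →ₗ[ℝ] _) (f 1) = f 0 := by
    have h := GLinv_apply ax (f 0); rwa [hax1] at h
  have haxi2 : (↑(ax⁻¹) : (Fin 4 → ℝ) →ₗ[ℝ] _) (f 2) = -f 3 := by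
    have h := GLinv_apply ax (f 3); rw [hax4, map_neg] at h
    exact neg_eq_iff_eq_neg.mp h
  have haxi3 : (↑(ax⁻¹) : (Fin 4 → ℝ) →ₗ[ℝ] _) (f 3) = f 2 := by
    have h := GLinv_apply ax (f 2); rwa [hax3] at h
  have hayi0 : (↑(ay⁻¹) : (Fin 4 → ℝ) →ₗ[ℝ] _) (f 0) = -f 2 := by
    have h := GLinv_apply ay (f 2); rw [hay2, map_neg] at h
    exact neg_eq_iff_eq_neg.mp h
  have hayi1 : (↑(ay⁻¹) : (Fin 4 → ℝ) →ₗ[ℝ] _) (f 1) = -f 3 := by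
    have h := GLinv_apply ay (f 3); rw [hay4, map_neg] at h
    exact neg_eq_iff_eq_neg.mp h
  have hayi2 : (↑(ay⁻¹) : (Fin 4 → ℝ) →ₗ[ℝ] _) (f 2) = f 0 := by
    have h := GLinv_apply ay (f 0); rwa [hay1] at h
  have hayi3 : (↑(ay⁻¹) : (Fin 4 → ℝ) →ₗ[ℝ] _) (f 3) = f 1 := by
    have h := GLinv_apply ay (f 1); rwa [hay3] at h
  -- relations
  have R1 : cy = bx := GL4ext (by
    intro i; fin_cases i <;> simp [hcy1, hcy2, hcy3, hcy4, hbx1, hbx2, hbx3, hbx4])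
  have R2 : by' = cx := GL4ext (by
    intro i; fin_cases i <;> simp [hby1, hby2, hby3, hby4, hcx1, hcx2, hcx3, hcx4])
  have R3 : ax * ax = negId := GL4ext (by
    intro i; fin_cases i <;>
      simp [GLmul_apply, hax1, hax2, hax3, hax4, hneg, map_neg])
  have R4 : ay * ay = negId := GL4ext (by
    intro i; fin_cases i <;>
      simp [GLmul_apply, hay1, hay2, hay3, hay4, hneg, map_neg])
  have c1 : ax * cx * ax⁻¹ = cx := GL4ext (by
    intro i; fin_cases i <;>
      simp [GLmul_apply, haxi0, haxi1, haxi2, haxi3, hcx1, hcx2, hcx3, hcx4,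
        hax1, hax2, hax3, hax4, map_neg, neg_neg])
  have c2 : ax * bx * ax⁻¹ = bx * negId := GL4ext (by
    intro i; fin_cases i <;>
      simp [GLmul_apply, haxi0, haxi1, haxi2, haxi3, hbx1, hbx2, hbx3, hbx4,
        hax1, hax2, hax3, hax4, hneg, map_neg, neg_neg])
  have c3 : ax * negId * ax⁻¹ = negId := GL4ext (by
    intro i; fin_cases i <;>
      simp [GLmul_apply, haxi0, haxi1, haxi2, haxi3, hneg,
        hax1, hax2, hax3, hax4, map_neg, neg_neg])
  have c1' : ax⁻¹ * cx * ax = cx := GL4ext (by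
    intro i; fin_cases i <;>
      simp [GLmul_apply, haxi0, haxi1, haxi2, haxi3, hcx1, hcx2, hcx3, hcx4,
        hax1, hax2, hax3, hax4, map_neg, neg_neg])
  have c2' : ax⁻¹ * bx * ax = bx * negId := GL4ext (by
    intro i; fin_cases i <;>
      simp [GLmul_apply, haxi0, haxi1, haxi2, haxi3, hbx1, hbx2, hbx3, hbx4,
        hax1, hax2, hax3, hax4, hneg, map_neg, neg_neg])
  have c3' : ax⁻¹ * negId * ax = negId := GL4ext (by
    intro i; fin_cases i <;>
      simp [GLmul_apply, haxi0, haxi1, haxi2, haxi3, hneg,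
        hax1, hax2, hax3, hax4, map_neg, neg_neg])
  have d1 : ay * cx * ay⁻¹ = cx * negId := GL4ext (by
    intro i; fin_cases i <;>
      simp [GLmul_apply, hayi0, hayi1, hayi2, hayi3, hcx1, hcx2, hcx3, hcx4,
        hay1, hay2, hay3, hay4, hneg, map_neg, neg_neg])
  have d2 : ay * bx * ay⁻¹ = bx := GL4ext (by
    intro i; fin_cases i <;>
      simp [GLmul_apply, hayi0, hayi1, hayi2, hayi3, hbx1, hbx2, hbx3, hbx4,
        hay1, hay2, hay3, hay4, map_neg, neg_neg])
  have d3 : ay * negId * ay⁻¹ = negId := GL4ext (by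
    intro i; fin_cases i <;>
      simp [GLmul_apply, hayi0, hayi1, hayi2, hayi3, hneg,
        hay1, hay2, hay3, hay4, map_neg, neg_neg])
  have d1' : ay⁻¹ * cx * ay = cx * negId := GL4ext (by
    intro i; fin_cases i <;>
      simp [GLmul_apply, hayi0, hayi1, hayi2, hayi3, hcx1, hcx2, hcx3, hcx4,
        hay1, hay2, hay3, hay4, hneg, map_neg, neg_neg])
  have d2' : ay⁻¹ * bx * ay = bx := GL4ext (by
    intro i; fin_cases i <;>
      simp [GLmul_apply, hayi0, hayi1, hayi2, hayi3, hbx1, hbx2, hbx3, hbx4,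
        hay1, hay2, hay3, hay4, map_neg, neg_neg])
  have d3' : ay⁻¹ * negId * ay = negId := GL4ext (by
    intro i; fin_cases i <;>
      simp [GLmul_apply, hayi0, hayi1, hayi2, hayi3, hneg,
        hay1, hay2, hay3, hay4, map_neg, neg_neg])
  -- basic memberships in N
  have hcxN : cx ∈ N := Subgroup.subset_closure (by simp)
  have hbxN : bx ∈ N := Subgroup.subset_closure (by simp)
  have hnegN : negId ∈ N := Subgroup.subset_closure (by simp)
  -- conjugation stability of N
  have hconjax : ∀ n ∈ N, ax * n * ax⁻¹ ∈ N := by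
    apply conj_closure
    intro x hx
    simp only [Set.mem_insert_iff, Set.mem_singleton_iff] at hx
    rcases hx with rfl | rfl | rfl
    · rw [c1]; exact hcxN
    · rw [c2]; exact mul_mem hbxN hnegN
    · rw [c3]; exact hnegN
  have hconjax' : ∀ n ∈ N, ax⁻¹ * n * ax ∈ N := by
    have key : ∀ x ∈ ({cx, bx, negId} : Set (LinearMap.GeneralLinearGroup ℝ (Fin 4 → ℝ))), ax⁻¹ * x * (ax⁻¹)⁻¹ ∈ N := by
      intro x hx
      simp only [Set.mem_insert_iff, Set.mem_singleton_iff] at hx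
      rw [inv_inv]
      rcases hx with rfl | rfl | rfl
      · rw [c1']; exact hcxN
      · rw [c2']; exact mul_mem hbxN hnegN
      · rw [c3']; exact hnegN
    intro n hn
    have := conj_closure key n hn
    rwa [inv_inv] at this
  have hconjay : ∀ n ∈ N, ay * n * ay⁻¹ ∈ N := by
    apply conj_closure
    intro x hx
    simp only [Set.mem_insert_iff, Set.mem_singleton_iff] at hx
    rcases hx with rfl | rfl | rfl
    · rw [d1]; exact mul_mem hcxN hnegN
    · rw [d2]; exact hbxN
    · rw [d3]; exact hnegN
  have hconjay' : ∀ n ∈ N, ay⁻¹ * n * ay ∈ N := by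
    have key : ∀ x ∈ ({cx, bx, negId} : Set (LinearMap.GeneralLinearGroup ℝ (Fin 4 → ℝ))), ay⁻¹ * x * (ay⁻¹)⁻¹ ∈ N := by
      intro x hx
      simp only [Set.mem_insert_iff, Set.mem_singleton_iff] at hx
      rw [inv_inv]
      rcases hx with rfl | rfl | rfl
      · rw [d1']; exact mul_mem hcxN hnegN
      · rw [d2']; exact hbxN
      · rw [d3']; exact hnegN
    intro n hn
    have := conj_closure key n hn
    rwa [inv_inv] at this
  -- N is contained in both big subgroups
  have hNleX : N ≤ Subgroup.closure ({cx, ax, bx} : Set (LinearMap.GeneralLinearGroup ℝ (Fin 4 → ℝ))) := by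
    rw [hNdef, Subgroup.closure_le]
    intro x hx
    simp only [Set.mem_insert_iff, Set.mem_singleton_iff] at hx
    rcases hx with rfl | rfl | rfl
    · exact Subgroup.subset_closure (by simp)
    · exact Subgroup.subset_closure (by simp)
    · rw [← R3]
      exact mul_mem (Subgroup.subset_closure (by simp)) (Subgroup.subset_closure (by simp))
  have hNleY : N ≤ Subgroup.closure ({cy, ay, by'} : Set (LinearMap.GeneralLinearGroup ℝ (Fin 4 → ℝ))) := by
    rw [hNdef, Subgroup.closure_le]
    intro x hx
    simp only [Set.mem_insert_iff, Set.mem_singleton_iff] at hx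
    rcases hx with rfl | rfl | rfl
    · rw [← R2]; exact Subgroup.subset_closure (by simp)
    · rw [← R1]; exact Subgroup.subset_closure (by simp)
    · rw [← R4]
      exact mul_mem (Subgroup.subset_closure (by simp)) (Subgroup.subset_closure (by simp))
  -- coset descriptions
  have hmemX : ∀ g : LinearMap.GeneralLinearGroup ℝ (Fin 4 → ℝ), g ∈ Subgroup.closure ({cx, ax, bx} : Set (LinearMap.GeneralLinearGroup ℝ (Fin 4 → ℝ))) ↔
      (g ∈ N ∨ ax⁻¹ * g ∈ N) := by
    intro g
    constructor
    · intro hg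
      induction hg using Subgroup.closure_induction with
      | mem x hx =>
          simp only [Set.mem_insert_iff, Set.mem_singleton_iff] at hx
          rcases hx with rfl | rfl | rfl
          · exact Or.inl hcxN
          · refine Or.inr ?_
            rw [inv_mul_cancel]; exact N.one_mem
          · exact Or.inl hbxN
      | one => exact Or.inl N.one_mem
      | mul x y hx hy px py =>
          rcases px with px | px
          · rcases py with py | py
            · exact Or.inl (mul_mem px py)
            · refine Or.inr ?_
              have e : ax⁻¹ * (x * y) = (ax⁻¹ * x * ax) * (ax⁻¹ * y) := by group
              rw [e]; exact mul_mem (hconjax' x px) py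
          · rcases py with py | py
            · exact Or.inr (by
                have e : ax⁻¹ * (x * y) = (ax⁻¹ * x) * y := by group
                rw [e]; exact mul_mem px py)
            · refine Or.inl ?_
              have e : x * y = (ax * ax) * ((ax⁻¹ * (ax⁻¹ * x) * ax) * (ax⁻¹ * y)) := by
                group
              rw [e, R3]
              exact mul_mem hnegN (mul_mem (hconjax' _ px) py)
      | inv x hx px =>
          rcases px with px | px
          · exact Or.inl (inv_mem px)
          · refine Or.inr ?_
            have e : ax⁻¹ * x⁻¹ = (ax⁻¹ * (ax⁻¹ * x)⁻¹ * ax) * (ax * ax)⁻¹ := by group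
            rw [e]
            exact mul_mem (hconjax' _ (inv_mem px)) (inv_mem (by rw [R3]; exact hnegN))
    · rintro (hg | hg)
      · exact hNleX hg
      · have e : g = ax * (ax⁻¹ * g) := by group
        rw [e]
        exact mul_mem (Subgroup.subset_closure (by simp)) (hNleX hg)
  have hmemY : ∀ g : LinearMap.GeneralLinearGroup ℝ (Fin 4 → ℝ), g ∈ Subgroup.closure ({cy, ay, by'} : Set (LinearMap.GeneralLinearGroup ℝ (Fin 4 → ℝ))) ↔
      (g ∈ N ∨ ay⁻¹ * g ∈ N) := by
    intro g
    constructor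
    · intro hg
      induction hg using Subgroup.closure_induction with
      | mem x hx =>
          simp only [Set.mem_insert_iff, Set.mem_singleton_iff] at hx
          rcases hx with rfl | rfl | rfl
          · rw [R1]; exact Or.inl hbxN
          · refine Or.inr ?_
            rw [inv_mul_cancel]; exact N.one_mem
          · rw [R2]; exact Or.inl hcxN
      | one => exact Or.inl N.one_mem
      | mul x y hx hy px py =>
          rcases px with px | px
          · rcases py with py | py
            · exact Or.inl (mul_mem px py)
            · refine Or.inr ?_
              have e : ay⁻¹ * (x * y) = (ay⁻¹ * x * ay) * (ay⁻¹ * y) := by group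
              rw [e]; exact mul_mem (hconjay' x px) py
          · rcases py with py | py
            · exact Or.inr (by
                have e : ay⁻¹ * (x * y) = (ay⁻¹ * x) * y := by group
                rw [e]; exact mul_mem px py)
            · refine Or.inl ?_
              have e : x * y = (ay * ay) * ((ay⁻¹ * (ay⁻¹ * x) * ay) * (ay⁻¹ * y)) := by
                group
              rw [e, R4]
              exact mul_mem hnegN (mul_mem (hconjay' _ px) py)
      | inv x hx px =>
          rcases px with px | px
          · exact Or.inl (inv_mem px)
          · refine Or.inr ?_
            have e : ay⁻¹ * x⁻¹ = (ay⁻¹ * (ay⁻¹ * x)⁻¹ * ay) * (ay * ay)⁻¹ := by group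
            rw [e]
            exact mul_mem (hconjay' _ (inv_mem px)) (inv_mem (by rw [R4]; exact hnegN))
    · rintro (hg | hg)
      · exact hNleY hg
      · have e : g = ay * (ay⁻¹ * g) := by group
        rw [e]
        exact mul_mem (Subgroup.subset_closure (by simp)) (hNleY hg)
  -- N sits inside the invariant subgroup Ssub
  have hNS : N ≤ Ssub := by
    rw [hNdef, Subgroup.closure_le]
    intro x hx
    simp only [Set.mem_insert_iff, Set.mem_singleton_iff] at hx
    rcases hx with rfl | rfl | rfl
    · exact ⟨1, Or.inl rfl, Or.inr ⟨by rw [map_add, hcx1, hcx3, one_smul],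
        by rw [map_add, hcx2, hcx4, one_smul] <;> module⟩⟩
    · exact ⟨1, Or.inl rfl, Or.inl ⟨by rw [map_add, hbx1, hbx2, one_smul] <;> module,
        by rw [map_add, hbx3, hbx4, one_smul] <;> module⟩⟩
    · exact ⟨-1, Or.inr rfl, Or.inl ⟨by rw [map_add, hneg, hneg] <;> module,
        by rw [map_add, hneg, hneg] <;> module⟩⟩
  -- ax is not in Ssub
  have haxS : ax ∉ Ssub := by
    rintro ⟨ε, hε, h | h⟩
    · obtain ⟨h1, -⟩ := h
      rw [map_add, hax1, hax2] at h1
      have e0 := congrFun h1 (0 : Fin 4)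
      have e1 := congrFun h1 (1 : Fin 4)
      simp [f, Pi.single_apply] at e0 e1
      rcases hε with rfl | rfl <;> linarith
    · obtain ⟨h1, -⟩ := h
      rw [map_add, hax1, hax2] at h1
      have e1 := congrFun h1 (1 : Fin 4)
      simp [f, Pi.single_apply] at e1
    -- done?
  -- ax⁻¹ * ay is not in Ssub
  have haxay : ax⁻¹ * ay ∉ Ssub := by
    have hw : (ax⁻¹ * ay).val (f 0 + f 1) = -f 3 + f 2 := by
      rw [GLmul_apply, map_add, hay1, hay3, map_add, haxi2, haxi3]
    rintro ⟨ε, hε, h | h⟩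
    · obtain ⟨h1, -⟩ := h
      rw [hw] at h1
      have e2 := congrFun h1 (2 : Fin 4)
      simp [f, Pi.single_apply] at e2
    · obtain ⟨h1, -⟩ := h
      rw [hw] at h1
      have e2 := congrFun h1 (2 : Fin 4)
      have e3 := congrFun h1 (3 : Fin 4)
      simp [f, Pi.single_apply] at e2 e3
      rcases hε with rfl | rfl <;> linarith
  have haxN : ax ∉ N := fun h => haxS (hNS h)
  constructor
  · apply le_antisymm (le_inf hNleX hNleY)
    intro g hg
    obtain ⟨hgx, hgy⟩ := hg
    rcases (hmemX g).1 hgx with h1 | h1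
    · exact h1
    rcases (hmemY g).1 hgy with h2 | h2
    · exact h2
    exfalso
    apply haxay
    have e : ax⁻¹ * ay = (ax⁻¹ * g) * (ay⁻¹ * g)⁻¹ := by group
    rw [e]
    exact mul_mem (hNS h1) (inv_mem (hNS h2))
  · show (N.subgroupOf (Subgroup.closure ({cx, ax, bx} : Set (LinearMap.GeneralLinearGroup ℝ (Fin 4 → ℝ))))).index = 2
    rw [Subgroup.index_eq_two_iff]
    refine ⟨⟨ax, Subgroup.subset_closure (by simp)⟩, ?_⟩
    intro b
    rcases (hmemX b.val).1 b.2 with hb | hb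
    · refine Or.inr ⟨Subgroup.mem_subgroupOf.2 hb, fun hmem => ?_⟩
      have h : (b.val * ax : LinearMap.GeneralLinearGroup ℝ (Fin 4 → ℝ)) ∈ N := Subgroup.mem_subgroupOf.1 hmem
      apply haxN
      have e : ax = (b.val)⁻¹ * (b.val * ax) := by group
      rw [e]
      exact mul_mem (inv_mem hb) h
    · refine Or.inl ⟨Subgroup.mem_subgroupOf.2 ?_, fun hbN => ?_⟩
      · show (b.val * ax : LinearMap.GeneralLinearGroup ℝ (Fin 4 → ℝ)) ∈ N
        have e : (b.val * ax : LinearMap.GeneralLinearGroup ℝ (Fin 4 → ℝ)) = (ax * ax) * (ax⁻¹ * (ax⁻¹ * b.val) * ax) := by group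
        rw [e, R3]
        exact mul_mem hnegN (hconjax' _ hb)
      · have h' : (b.val : LinearMap.GeneralLinearGroup ℝ (Fin 4 → ℝ)) ∈ N := Subgroup.mem_subgroupOf.1 hbN
        apply haxN
        have e : ax = b.val * (ax⁻¹ * b.val)⁻¹ := by group
        rw [e]
        exact mul_mem h' (inv_mem hb)
end
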